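/- Let 𝒞 be a generalized curvature operator on a finite-dimensional real vector space V which is Jacobi–Tsankov, i.e. J_C(x)∘J_C(y) = J_C(y)∘J_C(x) for all x, y ∈ V. Then J_C(x)∘J_C(x) = 0 for every x ∈ V; in particular each J_C(x) is nilpotent, so 𝒞 is Osserman. -/
import Mathlib


noncomputable section

/-- The Jacobi operator `J(x) : y ↦ 𝒜(y,x)x` of a (tri)linear curvature operator `𝒜`. -/
def jacobiOp {V : Type*} [AddCommGroup V] [Module ℝ V]
    (Aop : V →ₗ[ℝ] V →ₗ[ℝ] V →ₗ[ℝ] V) (x : V) : V →ₗ[ℝ] V where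
  toFun y := Aop y x x
  map_add' y z := by simp
  map_smul' c y := by simp

/-- The polarized Jacobi operator `J(x,y) : z ↦ ½(𝒜(z,x)y + 𝒜(z,y)x)`. -/
def jacobiPol {V : Type*} [AddCommGroup V] [Module ℝ V]
    (Aop : V →ₗ[ℝ] V →ₗ[ℝ] V →ₗ[ℝ] V) (x y : V) : V →ₗ[ℝ] V where
  toFun z := (1/2 : ℝ) • (Aop z x y + Aop z y x)
  map_add' a b := by simp [smul_add]; abel
  map_smul' c a := by simp [smul_add, smul_comm c]

/-- If `𝒞` is a generalized curvature operator on `V` (a bilinear map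
`V × V → End(V)` with `𝒞(x,y) = -𝒞(y,x)` and the first Bianchi identity) which is
Jacobi–Tsankov, then `J_C(x) ∘ J_C(x) = 0` for every `x`; in particular each
`J_C(x)` is nilpotent, so `𝒞` is Osserman. -/
theorem generalized_jacobiTsankov
    {V : Type*} [AddCommGroup V] [Module ℝ V] [FiniteDimensional ℝ V]
    -- a generalized curvature operator 𝒞
    (C : V →ₗ[ℝ] V →ₗ[ℝ] V →ₗ[ℝ] V)
    (hC1 : ∀ x y z : V, C x y z = - C y x z)
    (hC2 : ∀ x y z : V, C x y z + C y z x + C z x y = 0)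
    -- 𝒞 is Jacobi–Tsankov
    (hJT : ∀ x y : V, jacobiOp C x ∘ₗ jacobiOp C y = jacobiOp C y ∘ₗ jacobiOp C x) :
    ∀ x : V, jacobiOp C x ∘ₗ jacobiOp C x = 0 ∧ IsNilpotent (jacobiOp C x) := by
  have hCxx : ∀ x z : V, C x x z = 0 := by
    intro x z
    have h := hC1 x x z
    have h2 : (2 : ℝ) • C x x z = 0 := by
      rw [two_smul]; nth_rewrite 1 [h]; simp
    exact (smul_eq_zero.mp h2).resolve_left (by norm_num)
  have hJ : ∀ x y : V, jacobiOp C x y = C y x x := fun x y => rfl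
  -- key identity: C (C x y y) x x = 0
  have key : ∀ x y : V, C (C x y y) x x = 0 := by
    intro x y
    have h := congrArg (fun f : V →ₗ[ℝ] V => f x) (hJT x y)
    simp only [LinearMap.comp_apply, hJ, hCxx, map_zero, LinearMap.zero_apply] at h
    simpa using h
  -- polarized version: C (C x y x) x x = 0
  have key2 : ∀ x y : V, C (C x y x) x x = 0 := by
    intro x y
    have h := key x (y + x)
    simp only [map_add, hCxx, add_zero, LinearMap.add_apply, key] at h
    simpa [map_add, key x y, hCxx] using h
  have main : ∀ x y : V, C (C y x x) x x = 0 := by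
    intro x y
    have h1 : C y x x = - C x y x := by rw [hC1 y x x]
    rw [h1]
    simp [key2]
  intro x
  have hcomp : jacobiOp C x ∘ₗ jacobiOp C x = 0 := by
    ext y
    simp only [LinearMap.comp_apply, LinearMap.zero_apply, hJ]
    exact main x y
  refine ⟨hcomp, ⟨2, ?_⟩⟩
  rw [pow_two, Module.End.mul_eq_comp, hcomp]
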